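/- Suppose the control set U(x) is finite for each state x ∈ S. If J* ≥ 0, then the iterates T̃^n(0) converge pointwise to J* as n → ∞. -/

import Mathlib

/-!
Common framework: countable-state/countable-control total-cost MDPs under the
General Convergence (GC) condition, following H. Yu, "On Convergence of Value
Iteration for a Class of Total Cost Markov Decision Processes".

States `S` and controls `C` are countable types; `U x` is the nonempty set of
feasible controls at `x`; `g x u ∈ (-∞, +∞]` is the one-stage cost (an `EReal`
that is never `⊥` on feasible pairs); `q x u x'` are transition probabilities.

A policy is represented by its conditional control distributions given the
(reversed) history of past (state, control) pairs and the current state.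
Expectations are computed by explicit countable sums, splitting every
extended-real quantity into its positive and negative parts (computed in
`ℝ≥0∞`) and recombining with the convention `∞ - ∞ = ∞`.
-/

open scoped ENNReal Classical
open Filter

noncomputable section

namespace GCMDP

/-- The positive part of an extended real, as an element of `ℝ≥0∞`. -/
def ePos (a : EReal) : ℝ≥0∞ := if a = ⊤ then ⊤ else ENNReal.ofReal a.toReal

/-- Recombine a positive part `P` and a negative part `N` into an extended real,
with the convention `∞ - ∞ = ∞`. -/
def signedSum (P N : ℝ≥0∞) : EReal := if P = ⊤ then ⊤ else (P : EReal) - (N : EReal)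

variable {S C : Type}

/-- A (randomized, history-dependent) policy: to each reversed list of past
(state, control) pairs and each current state it assigns a mass function on
controls. -/
def Policy (S C : Type) : Type := List (S × C) → S → C → ℝ≥0∞

/-- A policy is valid for the control constraint `U` if each of its conditional
distributions is a probability distribution concentrated on the feasible set. -/
def IsPolicy (U : S → Set C) (π : Policy S C) : Prop :=
  ∀ (h : List (S × C)) (x : S), (∑' u : C, π h x u) = 1 ∧ ∀ u : C, π h x u ≠ 0 → u ∈ U x

/-- A policy is nonrandomized if each of its conditional distributions is a
point mass. -/
def Nonrandomized (π : Policy S C) : Prop :=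
  ∀ (h : List (S × C)) (x : S), ∃ u : C, ∀ u' : C, π h x u' = if u' = u then 1 else 0

/-- The initial state recorded in a reversed history `h` with current state `x`. -/
def initOf (h : List (S × C)) (x : S) : S := ((h.getLast?).map Prod.fst).getD x

/-- A policy is semi-Markov if its decision at time `k` depends on the history
only through the time `k`, the initial state and the current state. -/
def IsSemiMarkov (π : Policy S C) : Prop :=
  ∀ (h h' : List (S × C)) (x : S), h.length = h'.length → initOf h x = initOf h' x →
    π h x = π h' x

/-- A policy is Markov if its decision at time `k` depends on the history only
through the time `k` and the current state. -/
def IsMarkov (π : Policy S C) : Prop :=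
  ∀ (h h' : List (S × C)) (x : S), h.length = h'.length → π h x = π h' x

/-- A policy is stationary if its decision depends only on the current state. -/
def IsStationary (π : Policy S C) : Prop :=
  ∀ (h h' : List (S × C)) (x : S), π h x = π h' x

/-- The stationary policy determined by a one-step decision rule `μ`. -/
def toPolicy (μ : S → C → ℝ≥0∞) : Policy S C := fun _ x u => μ x u

/-- Probability that, starting from `x₀` and following policy `π`, the first
transitions produce the reversed history `h` and current state `y`. -/
def histProb (q : S → C → S → ℝ≥0∞) (π : Policy S C) (x₀ : S) :
    List (S × C) → S → ℝ≥0∞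
  | [], y => if y = x₀ then 1 else 0
  | (z, u) :: h, y => histProb q π x₀ h z * π h z u * q z u y

/-- Marginal distribution of the state `x_n` at time `n` under policy `π`
started at `x₀`. -/
def sDist (q : S → C → S → ℝ≥0∞) (π : Policy S C) (x₀ : S) (n : ℕ) (y : S) : ℝ≥0∞ :=
  ∑' h : {l : List (S × C) // l.length = n}, histProb q π x₀ h.1 y

/-- Joint distribution of the state-control pair `(x_n, u_n)` at time `n`. -/
def saDist (q : S → C → S → ℝ≥0∞) (π : Policy S C) (x₀ : S) (n : ℕ) (y : S) (u : C) : ℝ≥0∞ :=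
  ∑' h : {l : List (S × C) // l.length = n}, histProb q π x₀ h.1 y * π h.1 y u

/-- Expectation `E^π_{x₀}[f(x_n, u_n)]` of a nonnegative cost. -/
def costAt (q : S → C → S → ℝ≥0∞) (π : Policy S C) (x₀ : S) (n : ℕ)
    (f : S → C → ℝ≥0∞) : ℝ≥0∞ :=
  ∑' y : S, ∑' u : C, saDist q π x₀ n y u * f y u

/-- Positive part `g₊` of the one-stage cost. -/
def gPos (g : S → C → EReal) (x : S) (u : C) : ℝ≥0∞ := ePos (g x u)

/-- Negative part `g₋` of the one-stage cost. -/
def gNeg (g : S → C → EReal) (x : S) (u : C) : ℝ≥0∞ := ePos (-(g x u))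

/-- `J_π^+(x) = E^π_x[∑_k g₊(x_k,u_k)]`. -/
def Jplus (q : S → C → S → ℝ≥0∞) (g : S → C → EReal) (π : Policy S C) (x : S) : ℝ≥0∞ :=
  ∑' n : ℕ, costAt q π x n (gPos g)

/-- `J_π^-(x) = E^π_x[∑_k g₋(x_k,u_k)]`. -/
def Jminus (q : S → C → S → ℝ≥0∞) (g : S → C → EReal) (π : Policy S C) (x : S) : ℝ≥0∞ :=
  ∑' n : ℕ, costAt q π x n (gNeg g)

/-- The total cost `J_π(x) = J_π^+(x) - J_π^-(x)` of a policy. -/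
def Jpol (q : S → C → S → ℝ≥0∞) (g : S → C → EReal) (π : Policy S C) (x : S) : EReal :=
  signedSum (Jplus q g π x) (Jminus q g π x)

/-- The general convergence (GC) condition: `sup_π J_π^-(x) < ∞` for all `x`. -/
def GC (U : S → Set C) (q : S → C → S → ℝ≥0∞) (g : S → C → EReal) : Prop :=
  ∀ x : S, (⨆ π ∈ {π' : Policy S C | IsPolicy U π'}, Jminus q g π x) ≠ ⊤

/-- The optimal cost function `J*(x) = inf_π J_π(x)`. -/
def Jstar (U : S → Set C) (q : S → C → S → ℝ≥0∞) (g : S → C → EReal) (x : S) : EReal :=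
  ⨅ π ∈ {π' : Policy S C | IsPolicy U π'}, Jpol q g π x

/-- `J^{*+}(x) = inf_π J_π^+(x)`. -/
def JstarPlus (U : S → Set C) (q : S → C → S → ℝ≥0∞) (g : S → C → EReal) (x : S) : ℝ≥0∞ :=
  ⨅ π ∈ {π' : Policy S C | IsPolicy U π'}, Jplus q g π x

/-- `J^{*-}(x) = inf_π J_π^-(x)`. -/
def JstarMinus (U : S → Set C) (q : S → C → S → ℝ≥0∞) (g : S → C → EReal) (x : S) : ℝ≥0∞ :=
  ⨅ π ∈ {π' : Policy S C | IsPolicy U π'}, Jminus q g π x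

/-- The general one-stage dynamic programming operator with one-stage cost `c`:
`(opT c J)(x) = inf_{u ∈ U(x)} { c(x,u) + ∑_{x'} J(x') q(x'|x,u) }`, where the
bracket is evaluated by separating positive and negative parts, with the
convention `∞ - ∞ = ∞`. -/
def opT (U : S → Set C) (q : S → C → S → ℝ≥0∞) (c : S → C → EReal)
    (J : S → EReal) (x : S) : EReal :=
  ⨅ u ∈ U x,
    signedSum (ePos (c x u) + ∑' x' : S, q x u x' * ePos (J x'))
      (ePos (-(c x u)) + ∑' x' : S, q x u x' * ePos (-(J x')))

/-- The dynamic programming operator `T` of the total cost problem. -/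
def Top (U : S → Set C) (q : S → C → S → ℝ≥0∞) (g : S → C → EReal) :
    (S → EReal) → S → EReal :=
  opT U q g

/-- The operator `T₊` associated with the positive part `g₊` of the cost. -/
def TopPlus (U : S → Set C) (q : S → C → S → ℝ≥0∞) (g : S → C → EReal) :
    (S → EReal) → S → EReal :=
  opT U q (fun x u => max (g x u) 0)

/-- The operator `T₋` associated with the (negated) negative part `-g₋` of the cost. -/
def TopMinus (U : S → Set C) (q : S → C → S → ℝ≥0∞) (g : S → C → EReal) :
    (S → EReal) → S → EReal :=
  opT U q (fun x u => min (g x u) 0)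

/-- The cost-free operator `T₀`. -/
def TopZero (U : S → Set C) (q : S → C → S → ℝ≥0∞) :
    (S → EReal) → S → EReal :=
  opT U q (fun _ _ => 0)

/-- The monotone-increasing modification `T̃(J) = max{J, T(J)}` of `T`. -/
def Ttil (U : S → Set C) (q : S → C → S → ℝ≥0∞) (g : S → C → EReal)
    (J : S → EReal) (x : S) : EReal :=
  max (J x) (Top U q g J x)

/-- The operator `T_μ` associated with a stationary decision rule `μ`. -/
def Tmu (q : S → C → S → ℝ≥0∞) (g : S → C → EReal) (μ : S → C → ℝ≥0∞)
    (J : S → EReal) (x : S) : EReal :=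
  signedSum (∑' u : C, μ x u * (ePos (g x u) + ∑' x' : S, q x u x' * ePos (J x')))
    (∑' u : C, μ x u * (ePos (-(g x u)) + ∑' x' : S, q x u x' * ePos (-(J x'))))

/-- Expectation `E^π_{x₀}[J(x_n)]` of an extended-real function of the state at
time `n` (positive and negative parts combined with the convention `∞-∞=∞`). -/
def expState (q : S → C → S → ℝ≥0∞) (π : Policy S C) (x₀ : S) (n : ℕ)
    (J : S → EReal) : EReal :=
  signedSum (∑' y : S, sDist q π x₀ n y * ePos (J y))
    (∑' y : S, sDist q π x₀ n y * ePos (-(J y)))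

/-- The expected tail cost `E^π_{x₀}[∑_{k ≥ n} g(x_k, u_k)]`. -/
def tailCost (q : S → C → S → ℝ≥0∞) (g : S → C → EReal) (π : Policy S C)
    (x₀ : S) (n : ℕ) : EReal :=
  signedSum (∑' k : ℕ, costAt q π x₀ (n + k) (gPos g))
    (∑' k : ℕ, costAt q π x₀ (n + k) (gNeg g))

/-- Membership in the class `A₀(S)`: functions nowhere `-∞` such that
`inf_{n ≥ 1} T₀ⁿ(min{J, 0})` is nowhere `-∞`. -/
def MemA0 (U : S → Set C) (q : S → C → S → ℝ≥0∞) (J : S → EReal) : Prop :=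
  (∀ x : S, J x ≠ ⊥) ∧
    ∀ x : S, (⨅ n : ℕ, (TopZero U q)^[n + 1] (fun y => min (J y) 0) x) ≠ ⊥


lemma coe_ennreal_ne_top {p : ℝ≥0∞} (h : p ≠ ⊤) : (p : EReal) ≠ ⊤ := by
  simpa using h

lemma coe_ennreal_real {p : ℝ≥0∞} (h : p ≠ ⊤) : ((p.toReal : ℝ) : EReal) = (p : EReal) := by
  rw [← EReal.toReal_coe_ennreal (x := p)]
  exact EReal.coe_toReal (coe_ennreal_ne_top h) (EReal.coe_ennreal_ne_bot p)

@[simp] lemma ePos_zero : ePos 0 = 0 := by simp [ePos]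

lemma ePos_coe_real (r : ℝ) : ePos (r : EReal) = ENNReal.ofReal r := by
  rw [ePos, if_neg (EReal.coe_ne_top r), EReal.toReal_coe]

lemma toReal_nn {a : EReal} (h : 0 ≤ a) (ha : a ≠ ⊤) : 0 ≤ a.toReal := by
  have := EReal.toReal_le_toReal h (by simp) ha
  simpa using this

lemma ePos_coe_ennreal (p : ℝ≥0∞) : ePos (p : EReal) = p := by
  rcases eq_or_ne p ⊤ with rfl | hp
  · simp [ePos]
  · rw [ePos, if_neg (coe_ennreal_ne_top hp), EReal.toReal_coe_ennreal,
      ENNReal.ofReal_toReal hp]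

lemma coe_ePos {a : EReal} (h : 0 ≤ a) : (ePos a : EReal) = a := by
  rcases eq_or_ne a ⊤ with rfl | ha
  · simp [ePos]
  · have hb : a ≠ ⊥ := ne_of_gt (lt_of_lt_of_le EReal.bot_lt_zero h)
    rw [ePos, if_neg ha, EReal.coe_ennreal_ofReal,
      max_eq_left (toReal_nn h ha), EReal.coe_toReal ha hb]

lemma ePos_mono {a b : EReal} (h : a ≤ b) : ePos a ≤ ePos b := by
  rcases eq_or_ne b ⊤ with rfl | hb
  · simp [ePos]
  · have ha : a ≠ ⊤ := fun h' => hb (top_le_iff.1 (h' ▸ h))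
    rw [ePos, if_neg ha, ePos, if_neg hb]
    rcases eq_or_ne a ⊥ with rfl | ha'
    · simp
    · exact ENNReal.ofReal_le_ofReal (EReal.toReal_le_toReal h ha' hb)

lemma ePos_nonpos {a : EReal} (h : a ≤ 0) : ePos a = 0 := by
  simpa using ePos_mono h

lemma ePos_ne_top {a : EReal} (h : a ≠ ⊤) : ePos a ≠ ⊤ := by
  simp [ePos, if_neg h]

lemma signedSum_eq_sub {P N : ℝ≥0∞} (hN : N ≠ ⊤) : signedSum P N = (P : EReal) - N := by
  rcases eq_or_ne P ⊤ with rfl | hP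
  · rw [signedSum, if_pos rfl, EReal.coe_ennreal_top, ← coe_ennreal_real hN,
      EReal.top_sub_coe]
  · rw [signedSum, if_neg hP]

lemma signedSum_zero : signedSum 0 0 = 0 := by
  simp [signedSum]

lemma signedSum_mono {P P' N N' : ℝ≥0∞} (h1 : P ≤ P') (h2 : N' ≤ N) :
    signedSum P N ≤ signedSum P' N' := by
  rcases eq_or_ne P' ⊤ with rfl | hP'
  · rw [show signedSum ⊤ N' = ⊤ from if_pos rfl]; exact le_top
  · have hP : P ≠ ⊤ := fun h => hP' (top_le_iff.1 (h ▸ h1))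
    rw [signedSum, if_neg hP, signedSum, if_neg hP']
    exact EReal.sub_le_sub (by exact_mod_cast h1) (by exact_mod_cast h2)

lemma signedSum_cancel {P N c : ℝ≥0∞} (hc : c ≠ ⊤) :
    signedSum (P + c) (N + c) = signedSum P N := by
  rcases eq_or_ne P ⊤ with rfl | hP
  · rw [show signedSum (⊤ + c) (N + c) = ⊤ from if_pos (by simp),
      show signedSum ⊤ N = ⊤ from if_pos rfl]
  · have hPc : P + c ≠ ⊤ := ENNReal.add_ne_top.2 ⟨hP, hc⟩
    rw [signedSum, if_neg hPc, signedSum, if_neg hP]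
    rcases eq_or_ne N ⊤ with rfl | hN
    · rw [top_add, EReal.coe_ennreal_top, EReal.sub_top, EReal.sub_top]
    · have hNc : N + c ≠ ⊤ := ENNReal.add_ne_top.2 ⟨hN, hc⟩
      rw [← coe_ennreal_real hPc, ← coe_ennreal_real hNc, ← coe_ennreal_real hP,
        ← coe_ennreal_real hN, ← EReal.coe_sub, ← EReal.coe_sub,
        ENNReal.toReal_add hP hc, ENNReal.toReal_add hN hc]
      norm_num

lemma ePos_signedSum {P N : ℝ≥0∞} (hN : N ≠ ⊤) : ePos (signedSum P N) = P - N := by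
  rcases eq_or_ne P ⊤ with rfl | hP
  · rw [signedSum, if_pos rfl, ePos, if_pos rfl, ENNReal.top_sub hN]
  · rw [signedSum, if_neg hP, ← coe_ennreal_real hP, ← coe_ennreal_real hN,
      ← EReal.coe_sub, ePos_coe_real, ENNReal.ofReal_sub _ ENNReal.toReal_nonneg,
      ENNReal.ofReal_toReal hP, ENNReal.ofReal_toReal hN]

lemma ePos_neg_signedSum {P N : ℝ≥0∞} (hN : N ≠ ⊤) :
    ePos (-(signedSum P N)) = N - P := by
  rcases eq_or_ne P ⊤ with rfl | hP
  · rw [show signedSum ⊤ N = ⊤ from if_pos rfl, ENNReal.sub_top]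
    simp [ePos]
  · rw [signedSum, if_neg hP, ← coe_ennreal_real hP, ← coe_ennreal_real hN,
      ← EReal.coe_sub, ← EReal.coe_neg, ePos_coe_real, neg_sub,
      ENNReal.ofReal_sub _ ENNReal.toReal_nonneg,
      ENNReal.ofReal_toReal hP, ENNReal.ofReal_toReal hN]

lemma ePos_add_le {a : EReal} {P N : ℝ≥0∞} (h0 : 0 ≤ a) (ha : a ≤ signedSum P N)
    (hN : N ≠ ⊤) : ePos a + N ≤ P := by
  rcases eq_or_ne P ⊤ with rfl | hP
  · exact le_top
  · have hsub : signedSum P N = ((P.toReal - N.toReal : ℝ) : EReal) := by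
      rw [signedSum, if_neg hP, ← coe_ennreal_real hP, ← coe_ennreal_real hN, EReal.coe_sub]
    rw [hsub] at ha
    have haT : a ≠ ⊤ := ne_top_of_le_ne_top (EReal.coe_ne_top _) ha
    have haB : a ≠ ⊥ := ne_of_gt (lt_of_lt_of_le EReal.bot_lt_zero h0)
    have har : a.toReal ≤ P.toReal - N.toReal := by
      have := EReal.toReal_le_toReal ha haB (EReal.coe_ne_top _)
      simpa [← EReal.coe_sub] using this
    rw [ePos, if_neg haT, ← ENNReal.ofReal_toReal hN, ← ENNReal.ofReal_toReal hP,
      ← ENNReal.ofReal_add (toReal_nn h0 haT) ENNReal.toReal_nonneg]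
    exact ENNReal.ofReal_le_ofReal (by linarith)

lemma coe_ennreal_iSup (f : ℕ → ℝ≥0∞) : ((⨆ n, f n : ℝ≥0∞) : EReal) = ⨆ n, (f n : EReal) := by
  apply le_antisymm
  · have h0 : (0 : EReal) ≤ ⨆ n, (f n : EReal) :=
      le_trans (EReal.coe_ennreal_nonneg (f 0)) (le_iSup (fun n => ((f n : EReal))) 0)
    obtain ⟨t, ht⟩ : ∃ t : ℝ≥0∞, (t : EReal) = ⨆ n, (f n : EReal) := by
      lift (⨆ n, (f n : EReal)) to ℝ≥0∞ using h0 with t ht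
      exact ⟨t, rfl⟩
    rw [← ht, EReal.coe_ennreal_le_coe_ennreal_iff]
    refine iSup_le fun n => ?_
    rw [← EReal.coe_ennreal_le_coe_ennreal_iff, ht]
    exact le_iSup (fun n => ((f n : EReal))) n
  · exact iSup_le fun n => EReal.coe_ennreal_le_coe_ennreal_iff.2 (le_iSup f n)

lemma iSup_sub_real (f : ℕ → EReal) (c : ℝ) :
    (⨆ n, f n) - (c : EReal) = ⨆ n, (f n - (c : EReal)) := by
  apply le_antisymm
  · have h1 : (⨆ n, f n) ≤ (⨆ n, (f n - (c : EReal))) + (c : EReal) := by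
      refine iSup_le fun n => ?_
      have : f n - c + c = f n := EReal.sub_add_cancel
      rw [← this]
      exact add_le_add_left (le_iSup (fun n => f n - (c : EReal)) n) _
    calc (⨆ n, f n) - (c : EReal) ≤ ((⨆ n, (f n - (c : EReal))) + c) - c :=
          EReal.sub_le_sub h1 le_rfl
      _ = ⨆ n, (f n - (c : EReal)) := EReal.add_sub_cancel_right
  · exact iSup_le fun n => EReal.sub_le_sub (le_iSup f n) le_rfl

lemma signedSum_iSup {f : ℕ → ℝ≥0∞} {N : ℝ≥0∞} (hN : N ≠ ⊤) :
    signedSum (⨆ n, f n) N = ⨆ n, signedSum (f n) N := by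
  have : ∀ P, signedSum P N = (P : EReal) - ((N.toReal : ℝ) : EReal) := by
    intro P; rw [signedSum_eq_sub hN, coe_ennreal_real hN]
  simp only [this]
  rw [coe_ennreal_iSup, iSup_sub_real]

lemma tsum_iSup_mono {β : Type} (f : ℕ → β → ℝ≥0∞) (hf : Monotone f) :
    ∑' b, ⨆ n, f n b = ⨆ n, ∑' b, f n b := by
  rw [ENNReal.tsum_eq_iSup_sum]
  have h1 : ∀ s : Finset β, ∑ b ∈ s, ⨆ n, f n b = ⨆ n, ∑ b ∈ s, f n b := by
    intro s
    exact ENNReal.finsetSum_iSup_of_monotone fun b i j hij => hf hij b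
  simp only [h1]
  rw [iSup_comm]
  simp only [← ENNReal.tsum_eq_iSup_sum]

lemma iSup_inf_iSup (f g : ℕ → EReal) (hf : Monotone f) (hg : Monotone g) :
    (⨆ n, f n) ⊓ (⨆ n, g n) = ⨆ n, (f n ⊓ g n) := by
  apply le_antisymm
  · rw [le_iSup_iff]
    intro b hb
    rw [← forall_lt_iff_le]
    intro d hd
    obtain ⟨m, hm⟩ : ∃ m, d < f m := by
      have : d < ⨆ n, f n := lt_of_lt_of_le hd inf_le_left
      exact lt_iSup_iff.1 this
    obtain ⟨k, hk⟩ : ∃ k, d < g k := by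
      have : d < ⨆ n, g n := lt_of_lt_of_le hd inf_le_right
      exact lt_iSup_iff.1 this
    have : d < f (max m k) ⊓ g (max m k) :=
      lt_inf_iff.2 ⟨lt_of_lt_of_le hm (hf (le_max_left m k)),
        lt_of_lt_of_le hk (hg (le_max_right m k))⟩
    exact lt_of_lt_of_le this (hb (max m k))
  · exact iSup_le fun n => inf_le_inf (le_iSup f n) (le_iSup g n)

lemma iInf_iSup_of_monotone {C : Type} {s : Set C} (hs : s.Finite) (f : C → ℕ → EReal)
    (hf : ∀ u, Monotone (f u)) : ⨅ u ∈ s, ⨆ n, f u n = ⨆ n, ⨅ u ∈ s, f u n := by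
  refine Set.Finite.induction_on _ hs (by simp) ?_
  intro a t hat htfin ih
  rw [iInf_insert, ih]
  have hmono : Monotone (fun n => ⨅ u ∈ t, f u n) := by
    intro i j hij
    exact iInf_mono fun u => iInf_mono fun _ => hf u hij
  rw [iSup_inf_iSup _ _ (hf a) hmono]
  exact iSup_congr fun n => by rw [iInf_insert]

lemma avg_le {C : Type} [Countable C] (w A B : C → ℝ≥0∞) (hw : ∑' u, w u = 1)
    (hB : ∑' u, w u * B u ≠ ⊤) :
    ∃ u, w u ≠ 0 ∧ signedSum (A u) (B u) ≤
      signedSum (∑' u, w u * A u) (∑' u, w u * B u) := by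
  obtain ⟨u₀, hu₀⟩ : ∃ u, w u ≠ 0 := by
    by_contra h
    push_neg at h
    rw [tsum_congr h] at hw
    simp at hw
  set Sa := ∑' u, w u * A u with hSa
  set Sb := ∑' u, w u * B u with hSb
  rcases eq_or_ne Sa ⊤ with htop | hfin
  · exact ⟨u₀, hu₀, by rw [show signedSum Sa Sb = ⊤ from if_pos htop]; exact le_top⟩
  · by_contra hcon
    push_neg at hcon
    have hkey : ∀ u, w u * (B u + Sa) ≤ w u * (A u + Sb) := by
      intro u
      rcases eq_or_ne (w u) 0 with h0 | h0
      · simp [h0]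
      · have hA : A u ≠ ⊤ := by
          intro h
          apply hfin
          refine top_le_iff.1 ?_
          calc (⊤ : ℝ≥0∞) = w u * A u := by rw [h, ENNReal.mul_top h0]
            _ ≤ Sa := ENNReal.le_tsum u
        have hBu : B u ≠ ⊤ := by
          intro h
          apply hB
          refine top_le_iff.1 ?_
          calc (⊤ : ℝ≥0∞) = w u * B u := by rw [h, ENNReal.mul_top h0]
            _ ≤ Sb := ENNReal.le_tsum u
        have hlt := hcon u h0
        have hsum_lt : (Sa : EReal) - Sb < (A u : EReal) - B u := by
          rw [signedSum, if_neg hfin, signedSum, if_neg hA] at hlt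
          exact hlt
        have hreal : Sa.toReal - Sb.toReal < (A u).toReal - (B u).toReal := by
          rw [← coe_ennreal_real hfin, ← coe_ennreal_real hB, ← coe_ennreal_real hA,
            ← coe_ennreal_real hBu, ← EReal.coe_sub, ← EReal.coe_sub,
            EReal.coe_lt_coe_iff] at hsum_lt
          exact hsum_lt
        refine mul_le_mul_right ?_ _
        rw [← ENNReal.ofReal_toReal hA, ← ENNReal.ofReal_toReal hBu,
          ← ENNReal.ofReal_toReal hfin, ← ENNReal.ofReal_toReal hB,
          ← ENNReal.ofReal_add ENNReal.toReal_nonneg ENNReal.toReal_nonneg,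
          ← ENNReal.ofReal_add ENNReal.toReal_nonneg ENNReal.toReal_nonneg]
        exact ENNReal.ofReal_le_ofReal (by linarith)
    have hSbfin : Sb ≠ ⊤ := hB
    have hsum1 : ∑' u, w u * (B u + Sa) = Sb + Sa := by
      simp only [mul_add]
      rw [ENNReal.tsum_add, ENNReal.tsum_mul_right, hw, one_mul]
    have hsum2 : ∑' u, w u * (A u + Sb) = Sa + Sb := by
      simp only [mul_add]
      rw [ENNReal.tsum_add, ENNReal.tsum_mul_right, hw, one_mul]
    have hstrict : w u₀ * (B u₀ + Sa) < w u₀ * (A u₀ + Sb) := by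
      have h0 := hcon u₀ hu₀
      have hA : A u₀ ≠ ⊤ := by
        intro h
        apply hfin
        refine top_le_iff.1 ?_
        calc (⊤ : ℝ≥0∞) = w u₀ * A u₀ := by rw [h, ENNReal.mul_top hu₀]
          _ ≤ Sa := ENNReal.le_tsum u₀
      have hBu : B u₀ ≠ ⊤ := by
        intro h
        apply hB
        refine top_le_iff.1 ?_
        calc (⊤ : ℝ≥0∞) = w u₀ * B u₀ := by rw [h, ENNReal.mul_top hu₀]
          _ ≤ Sb := ENNReal.le_tsum u₀
      have hsum_lt : (Sa : EReal) - Sb < (A u₀ : EReal) - B u₀ := by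
        rw [signedSum, if_neg hfin, signedSum, if_neg hA] at h0
        exact h0
      have hreal : Sa.toReal - Sb.toReal < (A u₀).toReal - (B u₀).toReal := by
        rw [← coe_ennreal_real hfin, ← coe_ennreal_real hB, ← coe_ennreal_real hA,
          ← coe_ennreal_real hBu, ← EReal.coe_sub, ← EReal.coe_sub,
          EReal.coe_lt_coe_iff] at hsum_lt
        exact hsum_lt
      have hw1 : w u₀ ≠ ⊤ := by
        intro h
        have := ENNReal.le_tsum (f := w) u₀
        rw [h, hw] at this
        simp at this
      refine ENNReal.mul_lt_mul_right hu₀ hw1 ?_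
      rw [← ENNReal.ofReal_toReal hA, ← ENNReal.ofReal_toReal hBu,
        ← ENNReal.ofReal_toReal hfin, ← ENNReal.ofReal_toReal hB,
        ← ENNReal.ofReal_add ENNReal.toReal_nonneg ENNReal.toReal_nonneg,
        ← ENNReal.ofReal_add ENNReal.toReal_nonneg ENNReal.toReal_nonneg]
      exact ENNReal.ofReal_lt_ofReal_iff_of_nonneg (by positivity) |>.2 (by linarith)
    have hsplit1 := ENNReal.tsum_eq_add_tsum_ite (f := fun u => w u * (B u + Sa)) u₀
    have hsplit2 := ENNReal.tsum_eq_add_tsum_ite (f := fun u => w u * (A u + Sb)) u₀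
    have hRle : (∑' u, if u = u₀ then 0 else w u * (B u + Sa)) ≤
        ∑' u, if u = u₀ then 0 else w u * (A u + Sb) := by
      refine ENNReal.tsum_le_tsum fun u => ?_
      by_cases h : u = u₀ <;> simp [h, hkey u]
    have hRfin : (∑' u, if u = u₀ then 0 else w u * (B u + Sa)) ≠ ⊤ := by
      intro h
      have : ∑' u, w u * (B u + Sa) = ⊤ := by
        rw [hsplit1, h, add_top]
      rw [hsum1] at this
      exact (ENNReal.add_ne_top.2 ⟨hSbfin, hfin⟩) this
    have : ∑' u, w u * (B u + Sa) < ∑' u, w u * (A u + Sb) := by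
      rw [hsplit1, hsplit2]
      exact ENNReal.add_lt_add_of_lt_of_le hRfin hstrict hRle
    rw [hsum1, hsum2, add_comm] at this
    exact lt_irrefl _ this


variable {S C : Type}

/-- The policy obtained from `π` after a first step at `(x, u)`. -/
def shiftPol (π : Policy S C) (x : S) (u : C) : Policy S C := fun h y => π (h ++ [(x, u)]) y

lemma isPolicy_shiftPol {U : S → Set C} {π : Policy S C} (hπ : IsPolicy U π) (x : S) (u : C) :
    IsPolicy U (shiftPol π x u) := fun h y => hπ (h ++ [(x, u)]) y

def concatEquiv (S C : Type) (n : ℕ) :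
    ({l : List (S × C) // l.length = n} × (S × C)) ≃ {l : List (S × C) // l.length = n + 1} where
  toFun p := ⟨p.1.1 ++ [p.2], by simp [p.1.2]⟩
  invFun l := (⟨l.1.dropLast, by simp [l.2]⟩,
    l.1.getLast (by
      intro h
      have hl := l.2
      rw [h] at hl
      simp at hl))
  left_inv p := by
    obtain ⟨⟨t, ht⟩, a⟩ := p
    simp [List.dropLast_concat]
  right_inv l := by
    obtain ⟨l, hl⟩ := l
    have hne : l ≠ [] := by intro h; rw [h] at hl; simp at hl
    ext1
    simp [List.dropLast_append_getLast hne]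

lemma histProb_concat (q : S → C → S → ℝ≥0∞) (π : Policy S C) (x z : S) (u : C)
    (h : List (S × C)) (y : S) :
    histProb q π x (h ++ [(z, u)]) y
      = (if z = x then 1 else 0) * π [] z u *
        ∑' x' : S, q z u x' * histProb q (shiftPol π z u) x' h y := by
  induction h generalizing y with
  | nil =>
      have hsum : ∑' x' : S, q z u x' * histProb q (shiftPol π z u) x' [] y = q z u y := by
        rw [tsum_eq_single y]
        · rw [histProb]; simp
        · intro x' hx'
          rw [histProb]
          simp [Ne.symm hx']
      simp only [List.nil_append]
      rw [hsum]
      rfl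
  | cons p t ih =>
      obtain ⟨w, v⟩ := p
      show histProb q π x (t ++ [(z, u)]) w * π (t ++ [(z, u)]) w v * q w v y
        = (if z = x then 1 else 0) * π [] z u *
          ∑' x' : S, q z u x' *
            (histProb q (shiftPol π z u) x' t w * shiftPol π z u t w v * q w v y)
      rw [ih w]
      have hcg : ∀ x' : S,
          q z u x' * (histProb q (shiftPol π z u) x' t w * shiftPol π z u t w v * q w v y)
            = q z u x' * histProb q (shiftPol π z u) x' t w *
                (shiftPol π z u t w v * q w v y) := fun x' => by ring
      rw [tsum_congr hcg, ENNReal.tsum_mul_right]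
      have hP : π (t ++ [(z, u)]) w v = shiftPol π z u t w v := rfl
      rw [hP]
      ring

lemma saDist_zero (q : S → C → S → ℝ≥0∞) (π : Policy S C) (x y : S) (u : C) :
    saDist q π x 0 y u = (if y = x then 1 else 0) * π [] y u := by
  rw [saDist, tsum_eq_single (⟨[], rfl⟩ : {l : List (S × C) // l.length = 0})]
  · rw [histProb]
  · intro b hb
    exact absurd (Subtype.ext (List.length_eq_zero_iff.1 b.2)) hb

lemma costAt_zero [Countable S] [Countable C] (q : S → C → S → ℝ≥0∞) (π : Policy S C)
    (x : S) (f : S → C → ℝ≥0∞) :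
    costAt q π x 0 f = ∑' u : C, π [] x u * f x u := by
  rw [costAt, tsum_eq_single x]
  · refine tsum_congr fun u => ?_
    rw [saDist_zero]
    simp
  · intro y hy
    have hz : ∀ u : C, saDist q π x 0 y u * f y u = 0 := by
      intro u
      rw [saDist_zero]
      simp [hy]
    simp [hz]

lemma tsum_weight_swap {A B E F : Type} [Countable A] [Countable B] [Countable E] [Countable F]
    (W : A → B → ℝ≥0∞) (D : A → B → E → F → ℝ≥0∞) :
    ∑' e : E, ∑' f : F, ∑' a : A, ∑' b : B, W a b * D a b e f
      = ∑' a : A, ∑' b : B, W a b * ∑' e : E, ∑' f : F, D a b e f := by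
  calc ∑' e : E, ∑' f : F, ∑' a : A, ∑' b : B, W a b * D a b e f
      = ∑' e : E, ∑' a : A, ∑' f : F, ∑' b : B, W a b * D a b e f :=
        tsum_congr fun e => ENNReal.tsum_comm
    _ = ∑' a : A, ∑' e : E, ∑' f : F, ∑' b : B, W a b * D a b e f := ENNReal.tsum_comm
    _ = ∑' a : A, ∑' e : E, ∑' b : B, ∑' f : F, W a b * D a b e f :=
        tsum_congr fun a => tsum_congr fun e => ENNReal.tsum_comm
    _ = ∑' a : A, ∑' b : B, ∑' e : E, ∑' f : F, W a b * D a b e f :=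
        tsum_congr fun a => ENNReal.tsum_comm
    _ = ∑' a : A, ∑' b : B, W a b * ∑' e : E, ∑' f : F, D a b e f := by
        refine tsum_congr fun a => tsum_congr fun b => ?_
        rw [← ENNReal.tsum_mul_left]
        exact tsum_congr fun e => ENNReal.tsum_mul_left

lemma saDist_succ [Countable S] [Countable C] (q : S → C → S → ℝ≥0∞) (π : Policy S C)
    (x : S) (n : ℕ) (y : S) (v : C) :
    saDist q π x (n + 1) y v
      = ∑' u : C, π [] x u *
          ∑' x' : S, q x u x' * saDist q (shiftPol π x u) x' n y v := by
  have h1 : ∀ t : {l : List (S × C) // l.length = n}, ∀ zu : S × C,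
      histProb q π x ((concatEquiv S C n (t, zu)).1) y * π ((concatEquiv S C n (t, zu)).1) y v
        = (if zu.1 = x then 1 else 0) *
            (π [] zu.1 zu.2 * ∑' x' : S, q zu.1 zu.2 x' *
              (histProb q (shiftPol π zu.1 zu.2) x' t.1 y *
                shiftPol π zu.1 zu.2 t.1 y v)) := by
    rintro ⟨t, ht⟩ ⟨z, u⟩
    show histProb q π x (t ++ [(z, u)]) y * π (t ++ [(z, u)]) y v = _
    rw [histProb_concat]
    have hP : π (t ++ [(z, u)]) y v = shiftPol π z u t y v := rfl
    rw [hP, mul_assoc, mul_assoc, ← ENNReal.tsum_mul_right]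
    congr 2
    refine tsum_congr fun x' => by ring
  calc saDist q π x (n + 1) y v
      = ∑' p : {l : List (S × C) // l.length = n} × (S × C),
          histProb q π x ((concatEquiv S C n p).1) y * π ((concatEquiv S C n p).1) y v := by
        rw [saDist, ← Equiv.tsum_eq (concatEquiv S C n)
          (fun l => histProb q π x l.1 y * π l.1 y v)]
    _ = ∑' t : {l : List (S × C) // l.length = n}, ∑' zu : S × C,
          (if zu.1 = x then 1 else 0) *
            (π [] zu.1 zu.2 * ∑' x' : S, q zu.1 zu.2 x' *
              (histProb q (shiftPol π zu.1 zu.2) x' t.1 y *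
                shiftPol π zu.1 zu.2 t.1 y v)) := by
        rw [ENNReal.tsum_prod']
        exact tsum_congr fun t => tsum_congr fun zu => h1 t zu
    _ = ∑' zu : S × C, ∑' t : {l : List (S × C) // l.length = n},
          (if zu.1 = x then 1 else 0) *
            (π [] zu.1 zu.2 * ∑' x' : S, q zu.1 zu.2 x' *
              (histProb q (shiftPol π zu.1 zu.2) x' t.1 y *
                shiftPol π zu.1 zu.2 t.1 y v)) := ENNReal.tsum_comm
    _ = ∑' z : S, ∑' u : C, ∑' t : {l : List (S × C) // l.length = n},
          (if z = x then 1 else 0) *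
            (π [] z u * ∑' x' : S, q z u x' *
              (histProb q (shiftPol π z u) x' t.1 y *
                shiftPol π z u t.1 y v)) := ENNReal.tsum_prod'
    _ = ∑' u : C, ∑' t : {l : List (S × C) // l.length = n},
          π [] x u * ∑' x' : S, q x u x' *
              (histProb q (shiftPol π x u) x' t.1 y *
                shiftPol π x u t.1 y v) := by
        rw [tsum_eq_single x]
        · simp
        · intro z hz
          simp [hz]
    _ = ∑' u : C, π [] x u * ∑' t : {l : List (S × C) // l.length = n},
          ∑' x' : S, q x u x' *
              (histProb q (shiftPol π x u) x' t.1 y *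
                shiftPol π x u t.1 y v) :=
        tsum_congr fun u => ENNReal.tsum_mul_left
    _ = ∑' u : C, π [] x u * ∑' x' : S, ∑' t : {l : List (S × C) // l.length = n},
          q x u x' *
              (histProb q (shiftPol π x u) x' t.1 y *
                shiftPol π x u t.1 y v) :=
        tsum_congr fun u => by rw [ENNReal.tsum_comm]
    _ = ∑' u : C, π [] x u *
          ∑' x' : S, q x u x' * saDist q (shiftPol π x u) x' n y v := by
        refine tsum_congr fun u => ?_
        congr 1
        refine tsum_congr fun x' => ?_
        rw [ENNReal.tsum_mul_left]
        rfl

lemma costAt_succ [Countable S] [Countable C] (q : S → C → S → ℝ≥0∞) (π : Policy S C)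
    (x : S) (n : ℕ) (f : S → C → ℝ≥0∞) :
    costAt q π x (n + 1) f
      = ∑' u : C, π [] x u *
          ∑' x' : S, q x u x' * costAt q (shiftPol π x u) x' n f := by
  have h1 : ∀ y : S, ∀ v : C,
      saDist q π x (n + 1) y v * f y v
        = ∑' u : C, ∑' x' : S, (π [] x u * q x u x') *
            (saDist q (shiftPol π x u) x' n y v * f y v) := by
    intro y v
    rw [saDist_succ, ← ENNReal.tsum_mul_right]
    refine tsum_congr fun u => ?_
    rw [mul_assoc, ← ENNReal.tsum_mul_right, ← ENNReal.tsum_mul_left]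
    refine tsum_congr fun x' => by ring
  calc costAt q π x (n + 1) f
      = ∑' y : S, ∑' v : C, ∑' u : C, ∑' x' : S, (π [] x u * q x u x') *
          (saDist q (shiftPol π x u) x' n y v * f y v) := by
        rw [costAt]
        exact tsum_congr fun y => tsum_congr fun v => h1 y v
    _ = ∑' u : C, ∑' x' : S, (π [] x u * q x u x') *
          ∑' y : S, ∑' v : C, saDist q (shiftPol π x u) x' n y v * f y v :=
        tsum_weight_swap _ _
    _ = ∑' u : C, π [] x u *
          ∑' x' : S, q x u x' * costAt q (shiftPol π x u) x' n f := by
        refine tsum_congr fun u => ?_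
        rw [← ENNReal.tsum_mul_left]
        refine tsum_congr fun x' => ?_
        rw [costAt, mul_assoc]

lemma Jplus_step [Countable S] [Countable C] (q : S → C → S → ℝ≥0∞) (g : S → C → EReal)
    (π : Policy S C) (x : S) :
    Jplus q g π x = ∑' u : C, π [] x u *
      (gPos g x u + ∑' x' : S, q x u x' * Jplus q g (shiftPol π x u) x') := by
  rw [Jplus, tsum_eq_zero_add' ENNReal.summable, costAt_zero]
  have h2 : ∑' n : ℕ, costAt q π x (n + 1) (gPos g)
      = ∑' u : C, π [] x u * ∑' x' : S, q x u x' * Jplus q g (shiftPol π x u) x' := by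
    calc ∑' n : ℕ, costAt q π x (n + 1) (gPos g)
        = ∑' n : ℕ, ∑' u : C, π [] x u *
            ∑' x' : S, q x u x' * costAt q (shiftPol π x u) x' n (gPos g) :=
          tsum_congr fun n => costAt_succ q π x n (gPos g)
      _ = ∑' u : C, ∑' n : ℕ, π [] x u *
            ∑' x' : S, q x u x' * costAt q (shiftPol π x u) x' n (gPos g) :=
          ENNReal.tsum_comm
      _ = ∑' u : C, π [] x u * ∑' x' : S, q x u x' * Jplus q g (shiftPol π x u) x' := by
          refine tsum_congr fun u => ?_
          rw [ENNReal.tsum_mul_left]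
          congr 1
          rw [ENNReal.tsum_comm]
          refine tsum_congr fun x' => ?_
          rw [ENNReal.tsum_mul_left]
          rfl
  rw [h2, ← ENNReal.tsum_add]
  exact tsum_congr fun u => by rw [mul_add]

lemma Jminus_step [Countable S] [Countable C] (q : S → C → S → ℝ≥0∞) (g : S → C → EReal)
    (π : Policy S C) (x : S) :
    Jminus q g π x = ∑' u : C, π [] x u *
      (gNeg g x u + ∑' x' : S, q x u x' * Jminus q g (shiftPol π x u) x') := by
  rw [Jminus, tsum_eq_zero_add' ENNReal.summable, costAt_zero]
  have h2 : ∑' n : ℕ, costAt q π x (n + 1) (gNeg g)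
      = ∑' u : C, π [] x u * ∑' x' : S, q x u x' * Jminus q g (shiftPol π x u) x' := by
    calc ∑' n : ℕ, costAt q π x (n + 1) (gNeg g)
        = ∑' n : ℕ, ∑' u : C, π [] x u *
            ∑' x' : S, q x u x' * costAt q (shiftPol π x u) x' n (gNeg g) :=
          tsum_congr fun n => costAt_succ q π x n (gNeg g)
      _ = ∑' u : C, ∑' n : ℕ, π [] x u *
            ∑' x' : S, q x u x' * costAt q (shiftPol π x u) x' n (gNeg g) :=
          ENNReal.tsum_comm
      _ = ∑' u : C, π [] x u * ∑' x' : S, q x u x' * Jminus q g (shiftPol π x u) x' := by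
          refine tsum_congr fun u => ?_
          rw [ENNReal.tsum_mul_left]
          congr 1
          rw [ENNReal.tsum_comm]
          refine tsum_congr fun x' => ?_
          rw [ENNReal.tsum_mul_left]
          rfl
  rw [h2, ← ENNReal.tsum_add]
  exact tsum_congr fun u => by rw [mul_add]

lemma ePos_iSup {f : ℕ → EReal} (h0 : ∀ n, 0 ≤ f n) :
    ePos (⨆ n, f n) = ⨆ n, ePos (f n) := by
  have h : (⨆ n, f n) = ((⨆ n, ePos (f n) : ℝ≥0∞) : EReal) := by
    rw [coe_ennreal_iSup]
    exact (iSup_congr fun n => coe_ePos (h0 n)).symm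
  rw [h, ePos_coe_ennreal]

lemma ePos_neg_of_nonneg {a : EReal} (h : 0 ≤ a) : ePos (-a) = 0 :=
  ePos_nonpos (by rw [← neg_zero]; exact EReal.neg_le_neg_iff.2 h)

section MDP

variable {S C : Type} [Countable S] [Countable C]

lemma Jminus_ne_top {U : S → Set C} {q : S → C → S → ℝ≥0∞} {g : S → C → EReal}
    (hGC : GC U q g) {π : Policy S C} (hπ : IsPolicy U π) (x : S) :
    Jminus q g π x ≠ ⊤ := by
  intro h
  apply hGC x
  refine top_le_iff.1 ?_
  rw [← h]
  exact le_iSup₂ (f := fun π' (_ : π' ∈ {π' : Policy S C | IsPolicy U π'}) =>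
    Jminus q g π' x) π hπ

lemma Jstar_le_Jpol {U : S → Set C} {q : S → C → S → ℝ≥0∞} {g : S → C → EReal}
    {π : Policy S C} (hπ : IsPolicy U π) (x : S) :
    Jstar U q g x ≤ Jpol q g π x :=
  iInf₂_le π hπ

lemma opT_mono (U : S → Set C) (q : S → C → S → ℝ≥0∞) (c : S → C → EReal)
    {J J' : S → EReal} (h : ∀ y, J y ≤ J' y) (x : S) :
    opT U q c J x ≤ opT U q c J' x := by
  refine le_iInf₂ fun u hu => le_trans (iInf₂_le u hu) (signedSum_mono ?_ ?_)
  · exact add_le_add_right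
      (ENNReal.tsum_le_tsum fun x' => mul_le_mul_right (ePos_mono (h x')) _) _
  · exact add_le_add_right
      (ENNReal.tsum_le_tsum fun x' =>
        mul_le_mul_right (ePos_mono (EReal.neg_le_neg_iff.2 (h x'))) _) _

/-- The Bellman inequality `T J* ≤ J*` (when `J* ≥ 0`). -/
lemma Top_Jstar_le {U : S → Set C} {q : S → C → S → ℝ≥0∞} {g : S → C → EReal}
    (hg : ∀ x, ∀ u ∈ U x, g x u ≠ ⊥) (hGC : GC U q g)
    (hpos : ∀ x : S, 0 ≤ Jstar U q g x) (x : S) :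
    Top U q g (Jstar U q g) x ≤ Jstar U q g x := by
  rw [Jstar]
  refine le_iInf₂ fun π hπ => ?_
  have hπ' : IsPolicy U π := hπ
  set A : C → ℝ≥0∞ := fun u =>
    gPos g x u + ∑' x' : S, q x u x' * Jplus q g (shiftPol π x u) x' with hA
  set B : C → ℝ≥0∞ := fun u =>
    gNeg g x u + ∑' x' : S, q x u x' * Jminus q g (shiftPol π x u) x' with hB
  have hJp : Jpol q g π x = signedSum (∑' u, π [] x u * A u) (∑' u, π [] x u * B u) := by
    rw [Jpol, Jplus_step, Jminus_step]
  have hw : ∑' u, π [] x u = 1 := (hπ' [] x).1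
  have hBtop : ∑' u, π [] x u * B u ≠ ⊤ := by
    have hJm : Jminus q g π x = ∑' u, π [] x u * B u := Jminus_step q g π x
    rw [← hJm]
    exact Jminus_ne_top hGC hπ' x
  obtain ⟨u₀, hu0, hle⟩ := avg_le (fun u => π [] x u) A B hw hBtop
  have hu0U : u₀ ∈ U x := (hπ' [] x).2 u₀ hu0
  have hB0 : B u₀ ≠ ⊤ := by
    intro h
    apply hBtop
    refine top_le_iff.1 ?_
    calc (⊤ : ℝ≥0∞) = π [] x u₀ * B u₀ := by rw [h, ENNReal.mul_top hu0]
      _ ≤ _ := ENNReal.le_tsum u₀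
  have hNN : (∑' x' : S, q x u₀ x' * Jminus q g (shiftPol π x u₀) x') ≠ ⊤ := by
    intro h
    apply hB0
    rw [hB]
    simp [h]
  have hkey : ∀ x' : S, ePos (Jstar U q g x') + Jminus q g (shiftPol π x u₀) x'
      ≤ Jplus q g (shiftPol π x u₀) x' := fun x' =>
    ePos_add_le (hpos x') (Jstar_le_Jpol (isPolicy_shiftPol hπ' x u₀) x')
      (Jminus_ne_top hGC (isPolicy_shiftPol hπ' x u₀) x')
  have hsum : (∑' x' : S, q x u₀ x' * ePos (Jstar U q g x')) +
      (∑' x' : S, q x u₀ x' * Jminus q g (shiftPol π x u₀) x')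
      ≤ ∑' x' : S, q x u₀ x' * Jplus q g (shiftPol π x u₀) x' := by
    rw [← ENNReal.tsum_add]
    refine ENNReal.tsum_le_tsum fun x' => ?_
    rw [← mul_add]
    exact mul_le_mul_right (hkey x') _
  have hT : Top U q g (Jstar U q g) x ≤
      signedSum (gPos g x u₀ + ∑' x' : S, q x u₀ x' * ePos (Jstar U q g x'))
        (gNeg g x u₀) := by
    have h0 : ∀ x' : S, ePos (-(Jstar U q g x')) = 0 := fun x' =>
      ePos_neg_of_nonneg (hpos x')
    refine le_trans (iInf₂_le u₀ hu0U) (le_of_eq ?_)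
    simp only [h0, mul_zero, tsum_zero, add_zero]
    rfl
  refine hT.trans (le_trans ?_ (hJp ▸ hle))
  calc signedSum (gPos g x u₀ + ∑' x' : S, q x u₀ x' * ePos (Jstar U q g x'))
        (gNeg g x u₀)
      = signedSum
          (gPos g x u₀ + (∑' x' : S, q x u₀ x' * ePos (Jstar U q g x')) +
            ∑' x' : S, q x u₀ x' * Jminus q g (shiftPol π x u₀) x')
          (gNeg g x u₀ + ∑' x' : S, q x u₀ x' * Jminus q g (shiftPol π x u₀) x') :=
        (signedSum_cancel hNN).symm
    _ ≤ signedSum (A u₀) (B u₀) := by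
        refine signedSum_mono ?_ le_rfl
        rw [hA, add_assoc]
        exact add_le_add_right hsum _

/-- Point-mass decision rules. -/
def dirac (σ : S → C) : S → C → ℝ≥0∞ := fun x u => if u = σ x then 1 else 0

lemma tsum_dirac_mul (σ : S → C) (x : S) (F : C → ℝ≥0∞) :
    ∑' u : C, dirac σ x u * F u = F (σ x) := by
  rw [tsum_eq_single (σ x)]
  · simp [dirac]
  · intro u hu
    simp [dirac, hu]

lemma isPolicy_dirac {U : S → Set C} {σ : S → C} (hσ : ∀ x, σ x ∈ U x) :
    IsPolicy U (toPolicy (dirac σ)) := by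
  intro h x
  constructor
  · rw [show (∑' u : C, toPolicy (dirac σ) h x u) = ∑' u : C, dirac σ x u * 1 from
      tsum_congr fun u => (mul_one _).symm, tsum_dirac_mul]
  · intro u hu
    have : u = σ x := by
      by_contra hne
      exact hu (by simp [toPolicy, dirac, hne])
    rw [this]
    exact hσ x

lemma costAt_dirac_zero (q : S → C → S → ℝ≥0∞) (σ : S → C) (x : S) (f : S → C → ℝ≥0∞) :
    costAt q (toPolicy (dirac σ)) x 0 f = f x (σ x) := by
  rw [costAt_zero]
  exact tsum_dirac_mul σ x _

lemma costAt_dirac_succ (q : S → C → S → ℝ≥0∞) (σ : S → C) (x : S) (n : ℕ)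
    (f : S → C → ℝ≥0∞) :
    costAt q (toPolicy (dirac σ)) x (n + 1) f
      = ∑' x' : S, q x (σ x) x' * costAt q (toPolicy (dirac σ)) x' n f := by
  rw [costAt_succ]
  exact tsum_dirac_mul σ x _

/-- Partial expected positive cost of a stationary point-mass policy. -/
def pcost (q : S → C → S → ℝ≥0∞) (g : S → C → EReal) (σ : S → C) (n : ℕ) (x : S) : ℝ≥0∞ :=
  ∑ k ∈ Finset.range n, costAt q (toPolicy (dirac σ)) x k (gPos g)

def ncost (q : S → C → S → ℝ≥0∞) (g : S → C → EReal) (σ : S → C) (n : ℕ) (x : S) : ℝ≥0∞ :=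
  ∑ k ∈ Finset.range n, costAt q (toPolicy (dirac σ)) x k (gNeg g)

lemma partial_succ (q : S → C → S → ℝ≥0∞) (σ : S → C) (f : S → C → ℝ≥0∞) (n : ℕ) (x : S) :
    ∑ k ∈ Finset.range (n + 1), costAt q (toPolicy (dirac σ)) x k f
      = f x (σ x) + ∑' x' : S, q x (σ x) x' *
          ∑ k ∈ Finset.range n, costAt q (toPolicy (dirac σ)) x' k f := by
  rw [Finset.sum_range_succ']
  have h1 : ∀ k ∈ Finset.range n, costAt q (toPolicy (dirac σ)) x (k + 1) f
      = ∑' x' : S, q x (σ x) x' * costAt q (toPolicy (dirac σ)) x' k f :=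
    fun k _ => costAt_dirac_succ q σ x k f
  rw [Finset.sum_congr rfl h1, costAt_dirac_zero, add_comm]
  congr 1
  rw [← Summable.tsum_finsetSum (fun k _ => ENNReal.summable)]
  refine tsum_congr fun x' => ?_
  rw [Finset.mul_sum]

lemma pcost_succ (q : S → C → S → ℝ≥0∞) (g : S → C → EReal) (σ : S → C) (n : ℕ) (x : S) :
    pcost q g σ (n + 1) x
      = gPos g x (σ x) + ∑' x' : S, q x (σ x) x' * pcost q g σ n x' :=
  partial_succ q σ (gPos g) n x

lemma ncost_succ (q : S → C → S → ℝ≥0∞) (g : S → C → EReal) (σ : S → C) (n : ℕ) (x : S) :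
    ncost q g σ (n + 1) x
      = gNeg g x (σ x) + ∑' x' : S, q x (σ x) x' * ncost q g σ n x' :=
  partial_succ q σ (gNeg g) n x

lemma ncost_le_Jminus (q : S → C → S → ℝ≥0∞) (g : S → C → EReal) (σ : S → C) (n : ℕ)
    (x : S) : ncost q g σ n x ≤ Jminus q g (toPolicy (dirac σ)) x :=
  ENNReal.sum_le_tsum _

lemma Jplus_eq_iSup_pcost (q : S → C → S → ℝ≥0∞) (g : S → C → EReal) (σ : S → C) (x : S) :
    Jplus q g (toPolicy (dirac σ)) x = ⨆ n, pcost q g σ n x :=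
  ENNReal.tsum_eq_iSup_nat

lemma Tmu_dirac (q : S → C → S → ℝ≥0∞) (g : S → C → EReal) (σ : S → C) (J : S → EReal)
    (x : S) :
    Tmu q g (dirac σ) J x
      = signedSum (ePos (g x (σ x)) + ∑' x' : S, q x (σ x) x' * ePos (J x'))
          (ePos (-(g x (σ x))) + ∑' x' : S, q x (σ x) x' * ePos (-(J x'))) := by
  rw [Tmu, tsum_dirac_mul, tsum_dirac_mul]

lemma Tmu_mono (q : S → C → S → ℝ≥0∞) (g : S → C → EReal) (σ : S → C)
    {J J' : S → EReal} (h : ∀ y, J y ≤ J' y) (x : S) :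
    Tmu q g (dirac σ) J x ≤ Tmu q g (dirac σ) J' x := by
  rw [Tmu_dirac, Tmu_dirac]
  refine signedSum_mono ?_ ?_
  · exact add_le_add_right
      (ENNReal.tsum_le_tsum fun x' => mul_le_mul_right (ePos_mono (h x')) _) _
  · exact add_le_add_right
      (ENNReal.tsum_le_tsum fun x' =>
        mul_le_mul_right (ePos_mono (EReal.neg_le_neg_iff.2 (h x'))) _) _

lemma Tmu_signedSum (q : S → C → S → ℝ≥0∞) (g : S → C → EReal) (σ : S → C)
    {P N : S → ℝ≥0∞} (hN : ∀ x', N x' ≠ ⊤) {x : S}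
    (hNsum : (∑' x' : S, q x (σ x) x' * N x') ≠ ⊤) :
    Tmu q g (dirac σ) (fun x' => signedSum (P x') (N x')) x
      = signedSum (ePos (g x (σ x)) + ∑' x' : S, q x (σ x) x' * P x')
          (ePos (-(g x (σ x))) + ∑' x' : S, q x (σ x) x' * N x') := by
  rw [Tmu_dirac]
  have h1 : ∀ x', ePos (signedSum (P x') (N x')) = P x' - N x' := fun x' =>
    ePos_signedSum (hN x')
  have h2 : ∀ x', ePos (-(signedSum (P x') (N x'))) = N x' - P x' := fun x' =>
    ePos_neg_signedSum (hN x')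
  simp only [h1, h2]
  set c := ∑' x' : S, q x (σ x) x' * min (P x') (N x') with hc
  have hcfin : c ≠ ⊤ := by
    refine ne_top_of_le_ne_top hNsum ?_
    exact ENNReal.tsum_le_tsum fun x' => mul_le_mul_right (min_le_right _ _) _
  have hPsum : (∑' x' : S, q x (σ x) x' * P x')
      = (∑' x' : S, q x (σ x) x' * (P x' - N x')) + c := by
    rw [hc, ← ENNReal.tsum_add]
    refine tsum_congr fun x' => ?_
    rw [← mul_add, tsub_add_min]
  have hNsum' : (∑' x' : S, q x (σ x) x' * N x')
      = (∑' x' : S, q x (σ x) x' * (N x' - P x')) + c := by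
    rw [hc, ← ENNReal.tsum_add]
    refine tsum_congr fun x' => ?_
    rw [← mul_add, min_comm, tsub_add_min]
  rw [hPsum, hNsum', ← add_assoc, ← add_assoc, signedSum_cancel hcfin]

lemma Tmu_iter (U : S → Set C) (q : S → C → S → ℝ≥0∞) (g : S → C → EReal)
    (hGC : GC U q g) {σ : S → C} (hσ : ∀ x, σ x ∈ U x)
    (hg : ∀ x, ∀ u ∈ U x, g x u ≠ ⊥) (n : ℕ) :
    (Tmu q g (dirac σ))^[n] (fun _ => 0)
      = fun x => signedSum (pcost q g σ n x) (ncost q g σ n x) := by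
  have hnc : ∀ m x, ncost q g σ m x ≠ ⊤ := fun m x =>
    ne_top_of_le_ne_top (Jminus_ne_top hGC (isPolicy_dirac hσ) x) (ncost_le_Jminus q g σ m x)
  induction n with
  | zero =>
      funext x
      simp [pcost, ncost, signedSum_zero]
  | succ n ih =>
      rw [Function.iterate_succ_apply', ih]
      funext x
      have hsum : (∑' x' : S, q x (σ x) x' * ncost q g σ n x') ≠ ⊤ := by
        intro h
        apply hnc (n + 1) x
        rw [ncost_succ]
        simp [h]
      rw [Tmu_signedSum q g σ (fun x' => hnc n x') hsum, pcost_succ, ncost_succ]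
      rfl

end MDP

/-- if every control set `U(x)` is finite and `J* ≥ 0`, then
`T̃ⁿ(0) → J*` pointwise. -/
theorem value_iteration_finite_controls {S C : Type} [Countable S] [Countable C]
    (U : S → Set C) (q : S → C → S → ℝ≥0∞) (g : S → C → EReal)
    (hU : ∀ x, (U x).Nonempty)
    (hg : ∀ x, ∀ u ∈ U x, g x u ≠ ⊥)
    (hq : ∀ x, ∀ u ∈ U x, (∑' x' : S, q x u x') = 1)
    (hGC : GC U q g)
    (hUfin : ∀ x : S, (U x).Finite)
    (hpos : ∀ x : S, 0 ≤ Jstar U q g x) :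
    ∀ x : S, Filter.Tendsto (fun n : ℕ => (Ttil U q g)^[n] (fun _ => 0) x)
      Filter.atTop (nhds (Jstar U q g x)) := by
  classical
  set Vn : ℕ → S → EReal := fun n => (Ttil U q g)^[n] (fun _ => 0) with hVnDef
  have hsucc : ∀ n, Vn (n + 1) = Ttil U q g (Vn n) := fun n =>
    Function.iterate_succ_apply' _ _ _
  have hzero : Vn 0 = fun _ => 0 := rfl
  have hstep : ∀ n y, Vn n y ≤ Vn (n + 1) y := by
    intro n y
    rw [hsucc n]
    exact le_max_left _ _
  have hmono : ∀ y, Monotone fun n => Vn n y := fun y =>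
    monotone_nat_of_le_succ fun n => hstep n y
  have hnn : ∀ n y, (0 : EReal) ≤ Vn n y := by
    intro n
    induction n with
    | zero => intro y; rw [hzero]
    | succ n ih => intro y; exact (ih y).trans (hstep n y)
  set V : S → EReal := fun y => ⨆ n, Vn n y with hVdef
  have hVnn : ∀ y, (0 : EReal) ≤ V y := fun y => (hnn 0 y).trans (le_iSup (fun n => Vn n y) 0)
  have hVle : ∀ n y, Vn n y ≤ V y := fun n y => le_iSup (fun n => Vn n y) n
  -- upper bound: Vn n ≤ J*
  have hup : ∀ n y, Vn n y ≤ Jstar U q g y := by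
    intro n
    induction n with
    | zero => intro y; rw [hzero]; exact hpos y
    | succ n ih =>
        intro y
        rw [hsucc n]
        refine max_le (ih y) ?_
        exact le_trans (opT_mono U q g ih y) (Top_Jstar_le hg hGC hpos y)
  have hVJle : ∀ y, V y ≤ Jstar U q g y := fun y => iSup_le fun n => hup n y
  -- `Top` on nonnegative functions
  have hTop_nonneg : ∀ (J : S → EReal), (∀ y, 0 ≤ J y) → ∀ y, Top U q g J y =
      ⨅ u ∈ U y, signedSum (ePos (g y u) + ∑' x' : S, q y u x' * ePos (J x'))
        (ePos (-(g y u))) := by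
    intro J hJ y
    refine iInf_congr fun u => iInf_congr fun hu => ?_
    have h0 : ∀ x', ePos (-(J x')) = 0 := fun x' => ePos_neg_of_nonneg (hJ x')
    simp only [h0, mul_zero, tsum_zero, add_zero]
  -- Top V ≤ V
  have hTopV : ∀ y, Top U q g V y ≤ V y := by
    intro y
    have hsum : ∀ u, (∑' x' : S, q y u x' * ePos (V x'))
        = ⨆ n, ∑' x' : S, q y u x' * ePos (Vn n x') := by
      intro u
      have hEp : ∀ x', ePos (V x') = ⨆ n, ePos (Vn n x') := fun x' =>
        ePos_iSup (fun n => hnn n x')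
      calc (∑' x' : S, q y u x' * ePos (V x'))
          = ∑' x' : S, ⨆ n, q y u x' * ePos (Vn n x') := by
            refine tsum_congr fun x' => ?_
            rw [hEp x', ENNReal.mul_iSup]
        _ = ⨆ n, ∑' x' : S, q y u x' * ePos (Vn n x') :=
            tsum_iSup_mono _ (fun m k hmk x' =>
              mul_le_mul_right (ePos_mono (hmono x' hmk)) _)
    have hTopVeq : Top U q g V y = ⨆ n, Top U q g (Vn n) y := by
      rw [hTop_nonneg V hVnn y]
      have hcg : ∀ (u : C), ∀ hu : u ∈ U y,
          signedSum (ePos (g y u) + ∑' x' : S, q y u x' * ePos (V x'))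
            (ePos (-(g y u)))
          = ⨆ n, signedSum (ePos (g y u) + ∑' x' : S, q y u x' * ePos (Vn n x'))
              (ePos (-(g y u))) := by
        intro u hu
        have hgne : (-(g y u)) ≠ ⊤ := by
          simp only [ne_eq, EReal.neg_eq_top_iff]
          exact hg y u hu
        rw [hsum u, ENNReal.add_iSup, signedSum_iSup (ePos_ne_top hgne)]
      rw [iInf_congr fun u => iInf_congr fun hu => hcg u hu]
      rw [iInf_iSup_of_monotone (hUfin y)
        (fun u n => signedSum (ePos (g y u) + ∑' x' : S, q y u x' * ePos (Vn n x'))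
          (ePos (-(g y u))))
        (fun u m k hmk => signedSum_mono
          (add_le_add_right (ENNReal.tsum_le_tsum fun x' =>
            mul_le_mul_right (ePos_mono (hmono x' hmk)) _) _) le_rfl)]
      exact iSup_congr fun n => (hTop_nonneg (Vn n) (hnn n) y).symm
    rw [hTopVeq]
    refine iSup_le fun n => ?_
    refine le_trans ?_ (hVle (n + 1) y)
    rw [hsucc n]
    exact le_max_right _ _
  -- minimizing stationary selection
  have hsel : ∀ y : S, ∃ u, u ∈ U y ∧ ∀ u' ∈ U y,
      signedSum (ePos (g y u) + ∑' x' : S, q y u x' * ePos (V x')) (ePos (-(g y u)))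
      ≤ signedSum (ePos (g y u') + ∑' x' : S, q y u' x' * ePos (V x'))
          (ePos (-(g y u'))) := by
    intro y
    obtain ⟨u, hu, hmin⟩ := Set.exists_min_image (U y)
      (fun u => signedSum (ePos (g y u) + ∑' x' : S, q y u x' * ePos (V x'))
        (ePos (-(g y u)))) (hUfin y) (hU y)
    exact ⟨u, hu, hmin⟩
  choose σ hσU hσmin using hsel
  have hTmuV : ∀ y, Tmu q g (dirac σ) V y ≤ V y := by
    intro y
    have h0 : ∀ x' : S, ePos (-(V x')) = 0 := fun x' => ePos_neg_of_nonneg (hVnn x')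
    have hTd : Tmu q g (dirac σ) V y
        = signedSum (ePos (g y (σ y)) + ∑' x' : S, q y (σ y) x' * ePos (V x'))
            (ePos (-(g y (σ y)))) := by
      rw [Tmu_dirac]
      simp only [h0, mul_zero, tsum_zero, add_zero]
    rw [hTd]
    refine le_trans ?_ (hTopV y)
    rw [hTop_nonneg V hVnn y]
    exact le_iInf₂ fun u hu => hσmin y u hu
  have hiter : ∀ n y, (Tmu q g (dirac σ))^[n] (fun _ => 0) y ≤ V y := by
    intro n
    induction n with
    | zero => intro y; exact hVnn y
    | succ n ih =>
        intro y
        rw [Function.iterate_succ_apply']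
        exact le_trans (Tmu_mono q g σ ih y) (hTmuV y)
  have hJm_fin : ∀ y, Jminus q g (toPolicy (dirac σ)) y ≠ ⊤ := fun y =>
    Jminus_ne_top hGC (isPolicy_dirac hσU) y
  have hJpolV : ∀ y, Jpol q g (toPolicy (dirac σ)) y ≤ V y := by
    intro y
    have h1 : Jpol q g (toPolicy (dirac σ)) y
        = ⨆ n, signedSum (pcost q g σ n y) (Jminus q g (toPolicy (dirac σ)) y) := by
      rw [Jpol, Jplus_eq_iSup_pcost, signedSum_iSup (hJm_fin y)]
    rw [h1]
    refine iSup_le fun n => ?_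
    calc signedSum (pcost q g σ n y) (Jminus q g (toPolicy (dirac σ)) y)
        ≤ signedSum (pcost q g σ n y) (ncost q g σ n y) :=
          signedSum_mono le_rfl (ncost_le_Jminus q g σ n y)
      _ = (Tmu q g (dirac σ))^[n] (fun _ => 0) y := by
          rw [Tmu_iter U q g hGC hσU hg n]
      _ ≤ V y := hiter n y
  have hVeq : ∀ y, V y = Jstar U q g y := fun y =>
    le_antisymm (hVJle y)
      ((Jstar_le_Jpol (isPolicy_dirac hσU) y).trans (hJpolV y))
  intro x
  have ht : Filter.Tendsto (fun n => Vn n x) atTop (nhds (⨆ n, Vn n x)) :=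
    tendsto_atTop_iSup (hmono x)
  have hVx : (⨆ n, Vn n x) = Jstar U q g x := hVeq x
  rw [hVx] at ht
  exact ht

end GCMDP

end
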